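/- If F ⊆ [0,1]^d is compact and E is a microset of F that intersects the open cube (0,1)^d, then dim_L F ≤ dim_H E, where dim_L denotes the lower dimension and dim_H the Hausdorff dimension. In particular, dim_L F ≤ inf over all microsets E in the gallery of F of dim_H E. -/

import Mathlib

open Set Metric Filter Topology

/-- Smallest number of axis-parallel cubes of side length `r` (closed balls of radius `r/2`
in the sup metric on `Fin d → ℝ`) needed to cover `A`. -/
noncomputable def coverNum (d : ℕ) (A : Set (Fin d → ℝ)) (r : ℝ) : ℕ :=
  sInf {n : ℕ | ∃ t : Finset (Fin d → ℝ), t.card = n ∧ A ⊆ ⋃ x ∈ t, closedBall x (r / 2)}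

/-- The lower dimension. -/
noncomputable def lowerDim (d : ℕ) (F : Set (Fin d → ℝ)) : ℝ :=
  sSup {s : ℝ | 0 ≤ s ∧ ∃ C : ℝ, 0 < C ∧ ∀ R : ℝ, 0 < R → R < 1 → ∀ r : ℝ, 0 < r → r < R →
    ∀ x ∈ F, C * (R / r) ^ s ≤ (coverNum d (closedBall x R ∩ F) r : ℝ)}

/-- The Assouad dimension. -/
noncomputable def assouadDim (d : ℕ) (F : Set (Fin d → ℝ)) : ℝ :=
  sInf {s : ℝ | 0 ≤ s ∧ ∃ C : ℝ, 0 < C ∧ ∀ R : ℝ, 0 < R → ∀ r : ℝ, 0 < r → r < R →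
    ∀ x ∈ F, (coverNum d (closedBall x R ∩ F) r : ℝ) ≤ C * (R / r) ^ s}

/-- Upper box dimension. -/
noncomputable def ubDim (d : ℕ) (A : Set (Fin d → ℝ)) : ℝ :=
  Filter.limsup (fun r : ℝ => Real.log (coverNum d A r) / (-Real.log r)) (𝓝[>] (0:ℝ))

/-- Lower box dimension. -/
noncomputable def lbDim (d : ℕ) (A : Set (Fin d → ℝ)) : ℝ :=
  Filter.liminf (fun r : ℝ => Real.log (coverNum d A r) / (-Real.log r)) (𝓝[>] (0:ℝ))

/-- `D` is a miniset of `F`: `D = (λF + t) ∩ [0,1]^d` with `λ ≥ 1`, and `D` is nonempty. -/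
def IsMiniset (d : ℕ) (F D : Set (Fin d → ℝ)) : Prop :=
  ∃ lam : ℝ, 1 ≤ lam ∧ ∃ t : Fin d → ℝ,
    D = ((fun x => lam • x + t) '' F) ∩ Icc 0 1 ∧ D.Nonempty

/-- `E` is a microset of `F`: a Hausdorff-metric limit of minisets of `F`. -/
def IsMicroset (d : ℕ) (F E : Set (Fin d → ℝ)) : Prop :=
  IsCompact E ∧ E ⊆ Icc 0 1 ∧ ∃ D : ℕ → Set (Fin d → ℝ),
    (∀ n, IsMiniset d F (D n)) ∧
    Tendsto (fun n => hausdorffDist (D n) E) atTop (𝓝 0)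

/-- The gallery of `F`: microsets intersecting the interior of the unit cube. -/
def InGallery (d : ℕ) (F E : Set (Fin d → ℝ)) : Prop :=
  IsMicroset d F E ∧ (E ∩ interior (Icc (0 : Fin d → ℝ) 1)).Nonempty


lemma coverSet_nonempty {d : ℕ} {A K : Set (Fin d → ℝ)} (hK : IsCompact K) (hAK : A ⊆ K)
    {r : ℝ} (hr : 0 < r) :
    {n : ℕ | ∃ t : Finset (Fin d → ℝ), t.card = n ∧ A ⊆ ⋃ x ∈ t, closedBall x (r / 2)}.Nonempty := by
  obtain ⟨t, htfin, hcov⟩ := (Metric.totallyBounded_iff.mp hK.totallyBounded) (r/2) (half_pos hr)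
  refine ⟨htfin.toFinset.card, htfin.toFinset, rfl, ?_⟩
  refine hAK.trans (hcov.trans ?_)
  refine iUnion₂_subset fun x hx => ?_
  exact subset_iUnion₂_of_subset x (htfin.mem_toFinset.2 hx) ball_subset_closedBall

lemma coverNum_le_card {d : ℕ} {A : Set (Fin d → ℝ)} {r : ℝ} {u : Finset (Fin d → ℝ)}
    (h : A ⊆ ⋃ x ∈ u, closedBall x (r / 2)) : coverNum d A r ≤ u.card :=
  Nat.sInf_le ⟨u, rfl, h⟩

lemma one_le_coverNum {d : ℕ} {A K : Set (Fin d → ℝ)} (hK : IsCompact K) (hAK : A ⊆ K)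
    {r : ℝ} (hr : 0 < r) (hA : A.Nonempty) : 1 ≤ coverNum d A r := by
  obtain ⟨t, hcard, hcov⟩ := Nat.sInf_mem (coverSet_nonempty hK hAK hr)
  rw [Nat.one_le_iff_ne_zero]
  intro h0
  rw [coverNum] at h0
  rw [h0, Finset.card_eq_zero] at hcard
  obtain ⟨a, ha⟩ := hA
  simpa [hcard] using hcov ha

lemma coverNum_le_coverNum_image {d : ℕ} {A K : Set (Fin d → ℝ)} (hK : IsCompact K)
    {lam : ℝ} (hlam : 0 < lam) {w : Fin d → ℝ}
    (himg : ((fun x => lam • x + w) '' A) ⊆ K) {r : ℝ} (hr : 0 < r) :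
    coverNum d A (r / lam) ≤ coverNum d ((fun x => lam • x + w) '' A) r := by
  obtain ⟨u, hcard, hcov⟩ := Nat.sInf_mem (coverSet_nonempty hK himg hr)
  calc coverNum d A (r / lam) ≤ (u.image (fun c => lam⁻¹ • (c - w))).card := by
        refine coverNum_le_card ?_
        intro a ha
        have := hcov ⟨a, ha, rfl⟩
        simp only [mem_iUnion, Finset.mem_coe, exists_prop] at this ⊢
        obtain ⟨c, hc, hdist⟩ := this
        refine ⟨lam⁻¹ • (c - w), Finset.mem_image_of_mem _ hc, ?_⟩
        have h1 : a = lam⁻¹ • ((lam • a + w) - w) := by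
          simp [smul_smul, inv_mul_cancel₀ hlam.ne']
        rw [mem_closedBall, h1, dist_smul₀, dist_sub_right, Real.norm_eq_abs]
        rw [mem_closedBall] at hdist
        have : |lam⁻¹| = lam⁻¹ := abs_of_pos (by positivity)
        rw [this]
        calc lam⁻¹ * dist (lam • a + w) c ≤ lam⁻¹ * (r/2) := by
              exact mul_le_mul_of_nonneg_left hdist (by positivity)
          _ = r / lam / 2 := by field_simp
    _ ≤ u.card := Finset.card_image_le
    _ = coverNum d ((fun x => lam • x + w) '' A) r := by rw [coverNum]; exact hcard

lemma exists_separated {d : ℕ} {A K : Set (Fin d → ℝ)} (hK : IsCompact K) (hAK : A ⊆ K)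
    {ε : ℝ} (hε : 0 < ε) :
    ∃ P : Finset (Fin d → ℝ), ↑P ⊆ A ∧ (∀ p ∈ P, ∀ q ∈ P, p ≠ q → ε < dist p q) ∧
      coverNum d A (2 * ε) ≤ P.card := by
  set Sep : Finset (Fin d → ℝ) → Prop :=
    fun P => ↑P ⊆ A ∧ ∀ p ∈ P, ∀ q ∈ P, p ≠ q → ε < dist p q with hSep
  set T : Set ℕ := {n | ∃ P, Sep P ∧ P.card = n} with hT
  have hTne : T.Nonempty := ⟨0, ∅, ⟨by simp, by simp⟩, rfl⟩
  obtain ⟨t₀, ht₀fin, ht₀cov⟩ := (Metric.totallyBounded_iff.mp hK.totallyBounded) (ε/2)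
    (half_pos hε)
  have hbdd : BddAbove T := by
    refine ⟨ht₀fin.toFinset.card, fun n hn => ?_⟩
    obtain ⟨P, ⟨hPA, hPsep⟩, rfl⟩ := hn
    have : ∀ p ∈ P, ∃ c ∈ ht₀fin.toFinset, p ∈ ball c (ε/2) := by
      intro p hp
      have := ht₀cov (hAK (hPA hp))
      simp only [mem_iUnion, exists_prop] at this
      obtain ⟨c, hc, hpc⟩ := this
      exact ⟨c, ht₀fin.mem_toFinset.2 hc, hpc⟩
    choose φ hφmem hφball using this
    refine Finset.card_le_card_of_injOn (fun p => if hp : p ∈ P then φ p hp else 0)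
      (fun p hp => by simpa [Finset.mem_coe.1 hp] using hφmem p (Finset.mem_coe.1 hp)) ?_
    intro p hp q hq hpq
    simp only [Finset.mem_coe] at hp hq
    simp only [dif_pos hp, dif_pos hq] at hpq
    by_contra hne
    have h1 := hφball p hp
    have h2 := hφball q hq
    rw [hpq] at h1
    have : dist p q < ε := by
      calc dist p q ≤ dist p (φ q hq) + dist (φ q hq) q := dist_triangle _ _ _
        _ < ε/2 + ε/2 := by
            rw [mem_ball] at h1 h2
            exact add_lt_add h1 (by rwa [dist_comm] at h2)
        _ = ε := by ring
    exact absurd (hPsep p hp q hq hne) (not_lt.2 this.le)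
  obtain ⟨P, ⟨hPA, hPsep⟩, hPcard⟩ := Nat.sSup_mem hTne hbdd
  refine ⟨P, hPA, hPsep, ?_⟩
  have hmax : A ⊆ ⋃ p ∈ P, closedBall p ε := by
    intro a ha
    by_contra hnot
    simp only [mem_iUnion, exists_prop, not_exists, not_and, mem_closedBall, not_le] at hnot
    have haP : a ∉ P := fun h => by have := hnot a h; simp at this; linarith
    have hsep' : Sep (insert a P) := by
      constructor
      · intro x hx
        rcases Finset.mem_insert.1 (by exact_mod_cast hx) with rfl | hx'
        · exact ha
        · exact hPA hx'
      · intro p hp q hq hpq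
        rcases Finset.mem_insert.1 hp with rfl | hp' <;>
          rcases Finset.mem_insert.1 hq with rfl | hq'
        · exact absurd rfl hpq
        · exact hnot q hq'
        · rw [dist_comm]; exact hnot p hp'
        · exact hPsep p hp' q hq' hpq
    have : P.card + 1 ≤ sSup T := by
      refine le_csSup hbdd ⟨insert a P, hsep', ?_⟩
      rw [Finset.card_insert_of_notMem haP]
    omega
  refine coverNum_le_card ?_
  have : 2 * ε / 2 = ε := by ring
  rw [this]
  exact hmax

lemma miniset_bound {d : ℕ} {F D : Set (Fin d → ℝ)} (hD : IsMiniset d F D)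
    {C s : ℝ} (hs : 0 ≤ s)
    (hF : ∀ R : ℝ, 0 < R → R < 1 → ∀ r : ℝ, 0 < r → r < R → ∀ x ∈ F,
      C * (R / r) ^ s ≤ (coverNum d (closedBall x R ∩ F) r : ℝ))
    {x : Fin d → ℝ} (hx : x ∈ D) {R r : ℝ} (hr : 0 < r) (hrR : r < R) (hR1 : R < 1)
    (hball : closedBall x R ⊆ Icc 0 1) :
    C * (R / r) ^ s ≤ (coverNum d (closedBall x R ∩ D) r : ℝ) := by
  obtain ⟨lam, hlam, w, hDeq, -⟩ := hD
  have hlam0 : (0:ℝ) < lam := lt_of_lt_of_le one_pos hlam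
  have hx' : x ∈ ((fun y => lam • y + w) '' F) := (hDeq ▸ hx).1
  obtain ⟨x', hx'F, hx'eq⟩ := hx'
  have hdist : ∀ y y' : Fin d → ℝ, dist (lam • y + w) (lam • y' + w) = lam * dist y y' := by
    intro y y'
    rw [dist_add_right, dist_smul₀, Real.norm_eq_abs, abs_of_pos hlam0]
  have hset : closedBall x R ∩ D = (fun y => lam • y + w) '' (closedBall x' (R / lam) ∩ F) := by
    ext y
    constructor
    · rintro ⟨hy1, hy2⟩
      obtain ⟨y', hy'F, rfl⟩ := (hDeq ▸ hy2).1
      refine ⟨y', ⟨?_, hy'F⟩, rfl⟩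
      rw [mem_closedBall] at hy1 ⊢
      rw [← hx'eq, hdist] at hy1
      rw [le_div_iff₀ hlam0, mul_comm]
      exact hy1
    · rintro ⟨y', ⟨hy'b, hy'F⟩, rfl⟩
      have h1 : lam • y' + w ∈ closedBall x R := by
        rw [mem_closedBall] at hy'b ⊢
        rw [← hx'eq, hdist]
        calc lam * dist y' x' ≤ lam * (R / lam) :=
              mul_le_mul_of_nonneg_left hy'b hlam0.le
          _ = R := by field_simp
      exact ⟨h1, hDeq ▸ ⟨⟨y', hy'F, rfl⟩, hball h1⟩⟩
  have hR0 : (0:ℝ) < R := hr.trans hrR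
  have key := hF (R / lam) (div_pos hR0 hlam0) (by
      calc R / lam ≤ R / 1 := by gcongr
        _ = R := div_one R
        _ < 1 := hR1)
    (r / lam) (div_pos hr hlam0) (by gcongr) x' hx'F
  have key2 : coverNum d (closedBall x' (R / lam) ∩ F) (r / lam)
      ≤ coverNum d (closedBall x R ∩ D) r := by
    rw [hset]
    exact coverNum_le_coverNum_image isCompact_Icc hlam0
      (by rw [← hset]; exact fun y hy => hball hy.1) hr
  have hsimp : (R / lam) / (r / lam) = R / r := by
    field_simp
  rw [hsimp] at key
  calc C * (R / r) ^ s ≤ (coverNum d (closedBall x' (R / lam) ∩ F) (r / lam) : ℝ) := key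
    _ ≤ (coverNum d (closedBall x R ∩ D) r : ℝ) := by exact_mod_cast key2

lemma limit_bound {d : ℕ} {F E : Set (Fin d → ℝ)} (hEc : E ⊆ Icc 0 1)
    {D : ℕ → Set (Fin d → ℝ)} (hDm : ∀ n, IsMiniset d F (D n))
    (hconv : Tendsto (fun n => hausdorffDist (D n) E) atTop (𝓝 0))
    {C s : ℝ} (hC : 0 < C) (hs : 0 ≤ s)
    (hF : ∀ R : ℝ, 0 < R → R < 1 → ∀ r : ℝ, 0 < r → r < R → ∀ x ∈ F,
      C * (R / r) ^ s ≤ (coverNum d (closedBall x R ∩ F) r : ℝ))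
    {z : Fin d → ℝ} (hz : z ∈ E) {ρ : ℝ} (hρ : 0 < ρ) (hρ1 : ρ < 1)
    (hρ2 : closedBall z (2 * ρ) ⊆ Icc 0 1) :
    ∀ x ∈ E, dist x z ≤ ρ → ∀ R r : ℝ, 0 < r → r < R → R ≤ ρ →
      (C / 4 ^ s) * (R / r) ^ s ≤ (coverNum d (closedBall x R ∩ E) r : ℝ) := by
  intro x hxE hxz R r hr hrR hRρ
  have hR0 : (0:ℝ) < R := hr.trans hrR
  set δ : ℝ := min (r / 2) (min ((R - r) / 5) (R / 4)) with hδdef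
  have hδ : 0 < δ := by
    apply lt_min (by positivity) (lt_min (by linarith) (by positivity))
  have hδr : δ ≤ r / 2 := min_le_left _ _
  have hδRr : δ ≤ (R - r) / 5 := le_trans (min_le_right _ _) (min_le_left _ _)
  have hδR : δ ≤ R / 4 := le_trans (min_le_right _ _) (min_le_right _ _)
  obtain ⟨n, hn⟩ : ∃ n, hausdorffDist (D n) E < δ :=
    (hconv.eventually (gt_mem_nhds hδ)).exists
  have hDne : (D n).Nonempty := (hDm n).choose_spec.2.choose_spec.1 ▸ (hDm n).choose_spec.2.choose_spec.2
  have hDsub : D n ⊆ Icc 0 1 := by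
    obtain ⟨lam, hlam, w, hDeq, -⟩ := hDm n
    rw [hDeq]; exact inter_subset_right
  have hEne : E.Nonempty := ⟨z, hz⟩
  have hbdd : Bornology.IsBounded (Icc (0 : Fin d → ℝ) 1) := isCompact_Icc.isBounded
  have hedist : EMetric.hausdorffEdist (D n) E ≠ ⊤ :=
    Metric.hausdorffEdist_ne_top_of_nonempty_of_bounded hDne hEne
      (hbdd.subset hDsub) (hbdd.subset hEc)
  obtain ⟨y, hyD, hxy⟩ : ∃ y ∈ D n, dist x y < δ := by
    have h' : hausdorffDist E (D n) < δ := by rwa [hausdorffDist_comm]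
    exact exists_dist_lt_of_hausdorffDist_lt hxE h'
      (by rwa [EMetric.hausdorffEdist_comm])
  set R' : ℝ := R - 2 * δ with hR'def
  set r' : ℝ := r + 2 * δ with hr'def
  have hR'0 : 0 < R' := by rw [hR'def]; linarith
  have hr'R' : r' < R' := by rw [hr'def, hR'def]; linarith
  have hR'1 : R' < 1 := by rw [hR'def]; linarith
  have hballsub : closedBall y R' ⊆ Icc 0 1 := by
    refine subset_trans ?_ hρ2
    intro p hp
    rw [mem_closedBall] at hp ⊢
    calc dist p z ≤ dist p y + dist y x + dist x z := dist_triangle4 _ _ _ _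
      _ ≤ R' + δ + ρ := by
          refine add_le_add (add_le_add hp ?_) hxz
          rw [dist_comm]; exact hxy.le
      _ ≤ 2 * ρ := by rw [hR'def]; linarith
  have hmini := miniset_bound (hDm n) hs hF hyD (by rw [hr'def]; linarith) hr'R' hR'1 hballsub
  -- transfer covering numbers
  have htrans : coverNum d (closedBall y R' ∩ D n) r' ≤ coverNum d (closedBall x R ∩ E) r := by
    obtain ⟨u, hcard, hcov⟩ := Nat.sInf_mem
      (coverSet_nonempty isCompact_Icc (fun p hp => hEc hp.2) hr (A := closedBall x R ∩ E))
    calc coverNum d (closedBall y R' ∩ D n) r' ≤ u.card := by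
          refine coverNum_le_card ?_
          rintro p ⟨hp1, hp2⟩
          obtain ⟨q, hqE, hpq⟩ : ∃ q ∈ E, dist p q < δ :=
            exists_dist_lt_of_hausdorffDist_lt hp2 hn hedist
          have hqball : q ∈ closedBall x R := by
            rw [mem_closedBall] at hp1 ⊢
            calc dist q x ≤ dist q p + dist p y + dist y x := dist_triangle4 _ _ _ _
              _ ≤ δ + R' + δ := by
                  refine add_le_add (add_le_add ?_ hp1) ?_
                  · rw [dist_comm]; exact hpq.le
                  · rw [dist_comm]; exact hxy.le
              _ ≤ R := by rw [hR'def]; linarith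
          have := hcov ⟨hqball, hqE⟩
          simp only [mem_iUnion, exists_prop] at this ⊢
          obtain ⟨c, hc, hqc⟩ := this
          refine ⟨c, hc, ?_⟩
          rw [mem_closedBall] at hqc ⊢
          calc dist p c ≤ dist p q + dist q c := dist_triangle _ _ _
            _ ≤ δ + r / 2 := add_le_add hpq.le hqc
            _ ≤ r' / 2 := by rw [hr'def]; linarith
      _ = coverNum d (closedBall x R ∩ E) r := by rw [coverNum]; exact hcard
  have hratio : (R / r) / 4 ≤ R' / r' := by
    rw [div_le_div_iff₀ (by positivity) (by rw [hr'def]; linarith)]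
    have h1 : R' ≥ R / 2 := by rw [hR'def]; linarith
    have h2 : r' ≤ 2 * r := by rw [hr'def]; linarith
    calc R / r * r' ≤ R / r * (2 * r) := by
          apply mul_le_mul_of_nonneg_left h2 (by positivity)
      _ = 2 * R := by field_simp
      _ ≤ R' * 4 := by linarith
  calc C / 4 ^ s * (R / r) ^ s = C * ((R / r) / 4) ^ s := by
        rw [Real.div_rpow (by positivity : (0:ℝ) ≤ R / r) (by norm_num : (0:ℝ) ≤ 4) s]
        ring
    _ ≤ C * (R' / r') ^ s := by
        refine mul_le_mul_of_nonneg_left ?_ hC.le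
        exact Real.rpow_le_rpow (by positivity) hratio hs
    _ ≤ (coverNum d (closedBall y R' ∩ D n) r' : ℝ) := hmini
    _ ≤ (coverNum d (closedBall x R ∩ E) r : ℝ) := by exact_mod_cast htrans

set_option maxHeartbeats 2000000 in
lemma key_lemma {d : ℕ} {E : Set (Fin d → ℝ)} (hEcomp : IsCompact E)
    {z : Fin d → ℝ} (hz : z ∈ E) {ρ C' s : ℝ} (hρ : 0 < ρ) (hC' : 0 < C') (hs : 0 < s)
    (hP : ∀ x ∈ E, dist x z ≤ ρ → ∀ R r : ℝ, 0 < r → r < R → R ≤ ρ →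
      C' * (R / r) ^ s ≤ (coverNum d (closedBall x R ∩ E) r : ℝ)) :
    ENNReal.ofReal s ≤ dimH E := by
  by_contra hcon
  push_neg at hcon
  obtain ⟨t, ht0, htd, hts⟩ := ENNReal.lt_iff_exists_real_btwn.1 hcon
  have htpos : 0 < t := by
    rcases lt_or_ge 0 t with h | h
    · exact h
    · exfalso
      rw [ENNReal.ofReal_eq_zero.2 h] at htd
      simp at htd
  have hts' : t < s := by
    by_contra h
    push_neg at h
    exact absurd (ENNReal.ofReal_le_ofReal h) (not_le.2 hts)
  suffices hgoal : ENNReal.ofReal t ≤ dimH E by exact absurd htd (not_lt.2 hgoal)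
  clear hcon htd hts ht0
  -- choose the scale factor
  set A : ℝ := 2 / (C' * (10:ℝ) ^ (-s)) with hA
  have hApos : 0 < A := by
    apply div_pos two_pos
    exact mul_pos hC' (Real.rpow_pos_of_pos (by norm_num) _)
  set u : ℝ := max 20 (max (A ^ (1/(s-t))) ((2:ℝ) ^ (1/t))) with hu
  have hu20 : (20:ℝ) ≤ u := le_max_left _ _
  have hu0 : (0:ℝ) < u := lt_of_lt_of_le (by norm_num) hu20
  have hu1 : (1:ℝ) < u := lt_of_lt_of_le (by norm_num) hu20
  have hust : A ≤ u ^ (s - t) := by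
    have h1 : A ^ (1/(s-t)) ≤ u := le_trans (le_max_left _ _) (le_max_right _ _)
    have h2 : (A ^ (1/(s-t))) ^ (s-t) = A := by
      rw [← Real.rpow_mul hApos.le, one_div_mul_cancel (sub_pos.2 hts').ne',
        Real.rpow_one]
    rw [← h2]
    exact Real.rpow_le_rpow (Real.rpow_nonneg hApos.le _) h1 (by linarith)
  have hut2 : (2:ℝ) ≤ u ^ t := by
    have h1 : (2:ℝ) ^ (1/t) ≤ u := le_trans (le_max_right _ _) (le_max_right _ _)
    have h2 : ((2:ℝ) ^ (1/t)) ^ t = 2 := by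
      rw [← Real.rpow_mul (by norm_num), one_div_mul_cancel htpos.ne', Real.rpow_one]
    rw [← h2]
    exact Real.rpow_le_rpow (Real.rpow_nonneg (by norm_num) _) h1 htpos.le
  have hbig : u ^ t + 1 ≤ C' * (u/10) ^ s := by
    have e1 : C' * (u/10) ^ s = C' * (10:ℝ)^(-s) * u ^ s := by
      rw [Real.div_rpow hu0.le (by norm_num), Real.rpow_neg (by norm_num)]
      field_simp
    have e2 : u ^ s = u ^ (s - t) * u ^ t := by
      rw [← Real.rpow_add hu0]; ring_nf
    have e3 : C' * (10:ℝ)^(-s) * (u ^ (s-t) * u^t) ≥ C' * (10:ℝ)^(-s) * (A * u^t) := by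
      have hpos : 0 < C' * (10:ℝ)^(-s) := mul_pos hC' (Real.rpow_pos_of_pos (by norm_num) _)
      have : A * u^t ≤ u^(s-t) * u^t :=
        mul_le_mul_of_nonneg_right hust (Real.rpow_nonneg hu0.le _)
      exact mul_le_mul_of_nonneg_left this hpos.le
    have e4 : C' * (10:ℝ)^(-s) * (A * u^t) = 2 * u^t := by
      rw [hA]
      have hpos : (C' * (10:ℝ)^(-s)) ≠ 0 :=
        (mul_pos hC' (Real.rpow_pos_of_pos (by norm_num) _)).ne'
      field_simp
    have hut0 : 0 < u ^ t := Real.rpow_pos_of_pos hu0 _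
    rw [e1, e2]
    calc u ^ t + 1 ≤ 2 * u ^ t := by linarith
      _ = C' * (10:ℝ)^(-s) * (A * u^t) := e4.symm
      _ ≤ C' * (10:ℝ)^(-s) * (u ^ (s-t) * u^t) := e3
  -- scale factor b and branching number M
  set b : ℝ := u⁻¹ with hbdef
  have hb0 : 0 < b := inv_pos.2 hu0
  have hb1 : b < 1 := by rw [hbdef]; exact inv_lt_one_of_one_lt₀ hu1
  have hb20 : b ≤ 1/20 := by
    rw [hbdef]
    rw [inv_le_comm₀ hu0 (by norm_num)]
    simpa using hu20
  have hbu : b⁻¹ = u := inv_inv u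
  set M : ℕ := ⌊C' * (u/10) ^ s⌋₊ with hMdef
  have hXpos : 0 < C' * (u/10) ^ s := mul_pos hC' (Real.rpow_pos_of_pos (by positivity) _)
  have hMut : u ^ t < (M:ℝ) := by
    have h1 : C' * (u/10) ^ s - 1 < (M:ℝ) := Nat.sub_one_lt_floor _
    linarith
  have hM2 : 2 ≤ M := by
    have : (2:ℝ) < (M:ℝ) := lt_of_le_of_lt hut2 hMut
    exact_mod_cast this.le
  have hM0 : 0 < M := by omega
  have hM0' : (0:ℝ) < (M:ℝ) := by exact_mod_cast hM0
  -- scales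
  set Rk : ℕ → ℝ := fun k => (ρ/2) * b ^ k with hRkdef
  have hRk0 : ∀ k, 0 < Rk k := fun k => mul_pos (by linarith) (pow_pos hb0 k)
  have hRkρ : ∀ k, Rk k ≤ ρ := by
    intro k
    have h1 : b ^ k ≤ 1 := pow_le_one₀ hb0.le hb1.le
    rw [hRkdef]
    nlinarith
  have hRksucc : ∀ k, Rk (k+1) = b * Rk k := fun k => by rw [hRkdef]; ring
  have hRkmono : ∀ k, Rk (k+1) ≤ Rk k := by
    intro k
    rw [hRksucc]
    nlinarith [hRk0 k]
  -- children
  have hchild : ∀ (p : Fin d → ℝ) (k : ℕ), ∃ g : Fin M → (Fin d → ℝ),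
      (p ∈ E ∧ dist p z ≤ ρ * (1 - b ^ k)) →
      (∀ i, g i ∈ E ∧ dist (g i) p ≤ Rk k) ∧
      (∀ i j : Fin M, i ≠ j → 5 * Rk (k+1) < dist (g i) (g j)) := by
    intro p k
    by_cases hp : p ∈ E ∧ dist p z ≤ ρ * (1 - b ^ k)
    swap
    · exact ⟨fun _ => z, fun h => absurd h hp⟩
    have hbk : (0:ℝ) < b ^ k := pow_pos hb0 k
    have hdistz : dist p z ≤ ρ := le_trans hp.2 (by nlinarith)
    obtain ⟨Q, hQA, hQsep, hQcard⟩ := exists_separated (isCompact_closedBall p (Rk k))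
      (inter_subset_left (t := E)) (mul_pos (by norm_num : (0:ℝ) < 5) (hRk0 (k+1)))
    have h10 : (10:ℝ) * Rk (k+1) < Rk k := by
      rw [hRksucc]
      nlinarith [hRk0 k]
    have hcov := hP p hp.1 hdistz (Rk k) (10 * Rk (k+1))
      (by positivity) h10 (hRkρ k)
    have hratio : Rk k / (10 * Rk (k+1)) = u / 10 := by
      rw [hRksucc, hbdef]
      field_simp
      ring
      exact mul_inv_cancel₀ (hRk0 k).ne'
    rw [hratio] at hcov
    have h25 : (2:ℝ) * (5 * Rk (k+1)) = 10 * Rk (k+1) := by ring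
    rw [h25] at hQcard
    have hcard : M ≤ Q.card := by
      have h1 : (M:ℝ) ≤ C' * (u/10) ^ s := Nat.floor_le hXpos.le
      have h2 : (M:ℝ) ≤ (Q.card : ℝ) := by
        calc (M:ℝ) ≤ C' * (u/10) ^ s := h1
          _ ≤ (coverNum d (closedBall p (Rk k) ∩ E) (10 * Rk (k+1)) : ℝ) := hcov
          _ ≤ (Q.card : ℝ) := by exact_mod_cast hQcard
      exact_mod_cast h2
    obtain ⟨Q', hQ'sub, hQ'card⟩ := Finset.exists_subset_card_eq hcard
    have e := Q'.equivFinOfCardEq hQ'card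
    refine ⟨fun i => (e.symm i : Fin d → ℝ), fun _ => ⟨?_, ?_⟩⟩
    · intro i
      have hmem : ((e.symm i : Fin d → ℝ)) ∈ Q := hQ'sub (e.symm i).2
      have := hQA hmem
      exact ⟨this.2, mem_closedBall.1 this.1⟩
    · intro i j hij
      have hne : ((e.symm i : Fin d → ℝ)) ≠ ((e.symm j : Fin d → ℝ)) := by
        intro h
        exact hij (by simpa using congrArg e (Subtype.ext h))
      exact hQsep _ (hQ'sub (e.symm i).2) _ (hQ'sub (e.symm j).2) hne
  -- the tree of points
  obtain ⟨node, hnode_nil, hnode_cons⟩ :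
      ∃ node : List (Fin M) → (Fin d → ℝ), node [] = z ∧
        ∀ (i : Fin M) (w : List (Fin M)),
          node (i :: w) = (hchild (node w) w.length).choose i :=
    ⟨fun v => List.rec z (fun i w ih => ((hchild ih w.length).choose i)) v, rfl,
      fun _ _ => rfl⟩
  have hInv : ∀ v : List (Fin M), node v ∈ E ∧ dist (node v) z ≤ ρ * (1 - b ^ v.length) := by
    intro v
    induction v with
    | nil =>
      rw [hnode_nil]
      refine ⟨hz, ?_⟩
      simp
    | cons i w ih =>
      have spec := (hchild (node w) w.length).choose_spec ih
      constructor
      · rw [hnode_cons]; exact (spec.1 i).1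
      · have h1 : dist ((hchild (node w) w.length).choose i) (node w) ≤ Rk w.length :=
          (spec.1 i).2
        have hbw : (0:ℝ) < b ^ w.length := pow_pos hb0 _
        simp only [List.length_cons]
        rw [hnode_cons]
        calc dist ((hchild (node w) w.length).choose i) z
            ≤ dist ((hchild (node w) w.length).choose i) (node w) + dist (node w) z :=
              dist_triangle _ _ _
          _ ≤ Rk w.length + ρ * (1 - b ^ w.length) := add_le_add h1 ih.2
          _ ≤ ρ * (1 - b ^ (w.length + 1)) := by
              have h2 : Rk w.length = (ρ/2) * b ^ w.length := rfl
              have h3 : b ^ (w.length + 1) = b * b ^ w.length := by ring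
              have h4 : b ≤ 1/2 := le_trans hb20 (by norm_num)
              rw [h2, h3]
              nlinarith [mul_nonneg (mul_nonneg hρ.le hbw.le) (sub_nonneg.2 h4)]
  have hsepn : ∀ (k : ℕ) (v v' : List (Fin M)), v.length = k → v'.length = k → v ≠ v' →
      5 * Rk k < dist (node v) (node v') := by
    intro k
    induction k with
    | zero =>
      intro v v' hv hv' hne
      exact absurd (by rw [List.length_eq_zero_iff.1 hv, List.length_eq_zero_iff.1 hv']) hne
    | succ k ih =>
      intro v v' hv hv' hne
      obtain ⟨i, w, rfl⟩ : ∃ i w, v = i :: w := by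
        cases v with
        | nil => simp at hv
        | cons a l => exact ⟨a, l, rfl⟩
      obtain ⟨i', w', rfl⟩ : ∃ i' w', v' = i' :: w' := by
        cases v' with
        | nil => simp at hv'
        | cons a l => exact ⟨a, l, rfl⟩
      have hw : w.length = k := by simpa using hv
      have hw' : w'.length = k := by simpa using hv'
      by_cases hww : w = w'
      · subst hww
        have hii : i ≠ i' := fun h => hne (by rw [h])
        have spec := (hchild (node w) w.length).choose_spec (hInv w)
        have h5 := spec.2 i i' hii
        rw [hnode_cons, hnode_cons, ← hw]
        exact h5
      · have hdist := ih w w' hw hw' hww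
        have spec := (hchild (node w) w.length).choose_spec (hInv w)
        have spec' := (hchild (node w') w'.length).choose_spec (hInv w')
        have h1 : dist (node (i :: w)) (node w) ≤ Rk k := by
          rw [hnode_cons, ← hw]; exact (spec.1 i).2
        have h2 : dist (node (i' :: w')) (node w') ≤ Rk k := by
          rw [hnode_cons, ← hw']; exact (spec'.1 i').2
        have h3 : 5 * Rk (k+1) ≤ 3 * Rk k := by
          rw [hRksucc]; nlinarith [hRk0 k]
        have h4 := dist_triangle4 (node w) (node (i :: w)) (node (i' :: w')) (node w')
        rw [dist_comm (node w) (node (i :: w))] at h4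
        linarith
  -- digit addresses
  obtain ⟨dg, hdg⟩ : ∃ dg : ℕ → ℝ → Fin M, ∀ j x, (dg j x : ℕ) = ⌊x * (M:ℝ)^j⌋₊ % M :=
    ⟨fun j x => ⟨⌊x * (M:ℝ)^j⌋₊ % M, Nat.mod_lt _ hM0⟩, fun _ _ => rfl⟩
  obtain ⟨addr, haddr0, haddrS⟩ : ∃ addr : ℕ → ℝ → List (Fin M), (∀ x, addr 0 x = []) ∧
      ∀ k x, addr (k+1) x = dg (k+1) x :: addr k x :=
    ⟨fun k => Nat.rec (fun _ => []) (fun k ih x => dg (k+1) x :: ih x) k,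
      fun _ => rfl, fun _ _ => rfl⟩
  have haddrlen : ∀ k x, (addr k x).length = k := by
    intro k
    induction k with
    | zero => intro x; rw [haddr0]; rfl
    | succ k ih => intro x; rw [haddrS]; simp [ih x]
  obtain ⟨Fk, hFk⟩ : ∃ Fk : ℕ → ℝ → (Fin d → ℝ), ∀ k x, Fk k x = node (addr k x) :=
    ⟨fun k x => node (addr k x), fun _ _ => rfl⟩
  have hFstep : ∀ x k, dist (Fk k x) (Fk (k+1) x) ≤ (ρ/2) * b ^ k := by
    intro x k
    have hI := hInv (addr k x)
    rw [haddrlen] at hI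
    have spec := (hchild (node (addr k x)) k).choose_spec
    rw [hFk, hFk, haddrS, hnode_cons, haddrlen, dist_comm]
    have h1 := ((spec hI).1 (dg (k+1) x)).2
    exact h1
  have hcauchy : ∀ x, ∃ l, Tendsto (fun k => Fk k x) atTop (𝓝 l) := fun x =>
    cauchySeq_tendsto_of_complete (cauchySeq_of_le_geometric b (ρ/2) hb1 (hFstep x))
  choose f hf using hcauchy
  have hftail : ∀ k x, dist (Fk k x) (f x) ≤ 2 * Rk k := by
    intro k x
    have h1 := dist_le_of_le_geometric_of_tendsto b (ρ/2) hb1 (hFstep x) (hf x) k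
    have h2 : (ρ/2) * b ^ k / (1 - b) ≤ 2 * Rk k := by
      have hb2 : b ≤ 1/2 := le_trans hb20 (by norm_num)
      have h3 : Rk k = (ρ/2) * b ^ k := rfl
      rw [h3, div_le_iff₀ (by linarith)]
      nlinarith [mul_nonneg (mul_nonneg (by linarith : (0:ℝ) ≤ ρ/2) (pow_pos hb0 k).le)
        (by linarith : (0:ℝ) ≤ 1 - 2*b)]
    exact h1.trans h2
  have hfE : ∀ x, f x ∈ E := by
    intro x
    exact hEcomp.isClosed.mem_of_tendsto (hf x)
      (Filter.Eventually.of_forall (fun k => hFk k x ▸ (hInv (addr k x)).1))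
  -- measurability
  obtain ⟨digitsOf, hdig0, hdigS⟩ : ∃ digitsOf : ℕ → ℕ → List (Fin M),
      (∀ m, digitsOf 0 m = []) ∧
      ∀ k m, digitsOf (k+1) m = (⟨m % M, Nat.mod_lt _ hM0⟩ : Fin M) :: digitsOf k (m / M) :=
    ⟨fun k => Nat.rec (fun _ => []) (fun k ih m => ⟨m % M, Nat.mod_lt _ hM0⟩ :: ih (m / M)) k,
      fun _ => rfl, fun _ _ => rfl⟩
  have haddr_eq : ∀ k x, addr k x = digitsOf k ⌊x * (M:ℝ)^k⌋₊ := by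
    intro k
    induction k with
    | zero => intro x; rw [haddr0, hdig0]
    | succ k ih =>
      intro x
      rw [haddrS, hdigS, ih x]
      congr 1
      · apply Fin.ext
        rw [hdg]
      · congr 1
        have h1 : (⌊x * (M:ℝ)^(k+1)⌋₊ : ℕ) / M = ⌊(x * (M:ℝ)^(k+1)) / M⌋₊ :=
          (Nat.floor_div_natCast _ _).symm
        rw [h1]
        congr 1
        field_simp
        ring
  have hfmeas : Measurable f := by
    refine measurable_of_tendsto_metrizable (f := fun k x => Fk k x) ?_ ?_
    · intro k
      have heq : Fk k =
          (fun m : ℕ => node (digitsOf k m)) ∘ (fun x : ℝ => ⌊x * (M:ℝ)^k⌋₊) := by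
        funext x
        rw [hFk, haddr_eq k x]; rfl
      have : Measurable ((fun m : ℕ => node (digitsOf k m)) ∘ (fun x : ℝ => ⌊x * (M:ℝ)^k⌋₊)) :=
        (measurable_of_countable _).comp
          (Nat.measurable_floor.comp (measurable_id.mul_const _))
      rw [← heq] at this
      exact this
    · rw [tendsto_pi_nhds]
      intro x
      exact hf x
  -- digits determine the integer
  have hdiginj : ∀ (k : ℕ) (m m' : ℕ), m < M^k → m' < M^k →
      digitsOf k m = digitsOf k m' → m = m' := by
    intro k
    induction k with
    | zero =>
      intro m m' hm hm' _
      simp [pow_zero] at hm hm'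
      omega
    | succ k ih =>
      intro m m' hm hm' heq
      rw [hdigS, hdigS] at heq
      simp only [List.cons.injEq, Fin.mk.injEq] at heq
      have h1 : m % M = m' % M := heq.1
      have h2 : m / M = m' / M := by
        refine ih _ _ ?_ ?_ heq.2
        · rw [Nat.div_lt_iff_lt_mul hM0, ← pow_succ]; exact hm
        · rw [Nat.div_lt_iff_lt_mul hM0, ← pow_succ]; exact hm'
      rw [← Nat.div_add_mod m M, ← Nat.div_add_mod m' M, h1, h2]
  -- key measure estimate
  have hkey : ∀ (k : ℕ) (B : Set (Fin d → ℝ)), EMetric.diam B ≤ ENNReal.ofReal (Rk k) →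
      MeasureTheory.volume (f ⁻¹' B ∩ Ico (0:ℝ) 1) ≤ ENNReal.ofReal ((1/(M:ℝ))^k) := by
    intro k B hB
    rcases (f ⁻¹' B ∩ Ico (0:ℝ) 1).eq_empty_or_nonempty with he | ⟨x₀, hx₀⟩
    · rw [he]
      simp
    · have hsame : ∀ x ∈ f ⁻¹' B ∩ Ico (0:ℝ) 1, addr k x = addr k x₀ := by
        intro x hx
        by_contra hne
        have hdist : dist (f x) (f x₀) ≤ Rk k := by
          have h1 := EMetric.edist_le_diam_of_mem (s := B) hx.1 hx₀.1
          have h2 : edist (f x) (f x₀) ≤ ENNReal.ofReal (Rk k) := h1.trans hB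
          rw [edist_dist] at h2
          exact (ENNReal.ofReal_le_ofReal_iff (hRk0 k).le).1 h2
        have hsep := hsepn k (addr k x) (addr k x₀) (haddrlen k x) (haddrlen k x₀) hne
        have ht1 := hftail k x
        have ht2 := hftail k x₀
        rw [hFk] at ht1 ht2
        have h4 := dist_triangle4 (node (addr k x)) (f x) (f x₀) (node (addr k x₀))
        rw [dist_comm (f x₀) (node (addr k x₀))] at h4
        linarith
      have hMk : (0:ℝ) < (M:ℝ)^k := pow_pos hM0' k
      have hsub : f ⁻¹' B ∩ Ico (0:ℝ) 1 ⊆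
          Ico ((⌊x₀ * (M:ℝ)^k⌋₊:ℝ)/(M:ℝ)^k) ((⌊x₀ * (M:ℝ)^k⌋₊+1:ℝ)/(M:ℝ)^k) := by
        intro x hx
        have hx0 : (0:ℝ) ≤ x := hx.2.1
        have hx1 : x < 1 := hx.2.2
        have hfl : ⌊x * (M:ℝ)^k⌋₊ = ⌊x₀ * (M:ℝ)^k⌋₊ := by
          refine hdiginj k _ _ ?_ ?_ ?_
          · rw [Nat.floor_lt (mul_nonneg hx0 hMk.le)]
            push_cast
            nlinarith
          · rw [Nat.floor_lt (mul_nonneg hx₀.2.1 hMk.le)]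
            push_cast
            nlinarith [hx₀.2.2, hMk]
          · rw [← haddr_eq k x, ← haddr_eq k x₀]
            exact hsame x hx
        have hle := Nat.floor_le (by positivity : (0:ℝ) ≤ x * (M:ℝ)^k)
        have hlt := Nat.lt_floor_add_one (x * (M:ℝ)^k)
        rw [hfl] at hle hlt
        constructor
        · rw [div_le_iff₀ hMk]
          exact hle
        · rw [lt_div_iff₀ hMk]
          exact hlt
      calc MeasureTheory.volume (f ⁻¹' B ∩ Ico (0:ℝ) 1)
          ≤ MeasureTheory.volume (Ico ((⌊x₀ * (M:ℝ)^k⌋₊:ℝ)/(M:ℝ)^k)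
              ((⌊x₀ * (M:ℝ)^k⌋₊+1:ℝ)/(M:ℝ)^k)) := MeasureTheory.measure_mono hsub
        _ = ENNReal.ofReal ((⌊x₀ * (M:ℝ)^k⌋₊+1:ℝ)/(M:ℝ)^k - (⌊x₀ * (M:ℝ)^k⌋₊:ℝ)/(M:ℝ)^k) :=
            Real.volume_Ico
        _ = ENNReal.ofReal ((1/(M:ℝ))^k) := by
            congr 1
            rw [one_div_pow]
            field_simp
            ring
  -- the measure
  set μ : MeasureTheory.Measure (Fin d → ℝ) :=
    MeasureTheory.Measure.map f (MeasureTheory.volume.restrict (Ico (0:ℝ) 1)) with hμdef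
  have hμapp : ∀ B : Set (Fin d → ℝ), MeasurableSet B →
      μ B = MeasureTheory.volume (f ⁻¹' B ∩ Ico (0:ℝ) 1) := by
    intro B hBm
    rw [hμdef, MeasureTheory.Measure.map_apply hfmeas hBm,
      MeasureTheory.Measure.restrict_apply (hfmeas hBm)]
  set c : ENNReal := ENNReal.ofReal ((ρ/2 * b) ^ t) with hcdef
  have hcpos : c ≠ 0 := by
    rw [hcdef]
    exact (ENNReal.ofReal_pos.2 (Real.rpow_pos_of_pos (by positivity) t)).ne'
  have hRk1pos : (0:ENNReal) < ENNReal.ofReal (Rk 1) := ENNReal.ofReal_pos.2 (hRk0 1)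
  have hμB : ∀ (B : Set (Fin d → ℝ)) (k : ℕ), EMetric.diam B ≤ ENNReal.ofReal (Rk k) →
      μ B ≤ ENNReal.ofReal ((1/(M:ℝ))^k) := by
    intro B k hk
    calc μ B ≤ μ (closure B) := MeasureTheory.measure_mono subset_closure
      _ = MeasureTheory.volume (f ⁻¹' (closure B) ∩ Ico (0:ℝ) 1) :=
          hμapp _ isClosed_closure.measurableSet
      _ ≤ ENNReal.ofReal ((1/(M:ℝ))^k) :=
          hkey k (closure B) (by exact (EMetric.diam_closure B).le.trans hk)
  have hfrost : ∀ B : Set (Fin d → ℝ), EMetric.diam B ≤ ENNReal.ofReal (Rk 1) →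
      (c • μ) B ≤ EMetric.diam B ^ t := by
    intro B hBd
    rcases eq_or_ne (EMetric.diam B) 0 with h0 | h0
    · have hμB0 : μ B = 0 := by
        have hlim : Tendsto (fun k : ℕ => ENNReal.ofReal ((1/(M:ℝ))^k)) atTop (𝓝 0) := by
          rw [← ENNReal.ofReal_zero]
          apply ENNReal.tendsto_ofReal
          apply tendsto_pow_atTop_nhds_zero_of_lt_one (by positivity)
          rw [div_lt_one hM0']
          exact_mod_cast by omega
        refine le_antisymm ?_ zero_le
        refine ge_of_tendsto hlim (Filter.Eventually.of_forall fun k => hμB B k ?_)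
        rw [h0]
        exact zero_le
      rw [MeasureTheory.Measure.smul_apply, hμB0, smul_eq_mul, mul_zero]
      exact zero_le
    · have hdne : EMetric.diam B ≠ ⊤ := ne_top_of_le_ne_top ENNReal.ofReal_ne_top hBd
      set δ : ℝ := (EMetric.diam B).toReal with hδdef
      have hδpos : 0 < δ := ENNReal.toReal_pos h0 hdne
      have hδle : δ ≤ Rk 1 := ENNReal.toReal_le_of_le_ofReal (hRk0 1).le hBd
      have hdiam : EMetric.diam B = ENNReal.ofReal δ := (ENNReal.ofReal_toReal hdne).symm
      have hex : ∃ k, Rk (k+1) < δ := by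
        have htend : Tendsto (fun k : ℕ => Rk k) atTop (𝓝 0) := by
          have hg := tendsto_pow_atTop_nhds_zero_of_lt_one hb0.le hb1
          have hg2 := hg.const_mul (ρ/2)
          simpa using hg2
        obtain ⟨k, hk⟩ := (htend.eventually (gt_mem_nhds hδpos)).exists
        exact ⟨k, lt_of_le_of_lt (hRkmono k) hk⟩
      set k₀ := Nat.find hex with hk₀def
      have hk₀1 : Rk (k₀+1) < δ := Nat.find_spec hex
      have hk₀2 : δ ≤ Rk k₀ := by
        rcases Nat.eq_zero_or_pos k₀ with h | h
        · rw [h]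
          exact hδle.trans (hRkmono 0)
        · obtain ⟨m, hm⟩ := Nat.exists_eq_succ_of_ne_zero h.ne'
          have hmin := Nat.find_min hex (by omega : m < k₀)
          rw [hm]
          exact le_of_not_gt hmin
      have hμBk := hμB B k₀ (by rw [hdiam]; exact ENNReal.ofReal_le_ofReal hk₀2)
      have hreal : (ρ/2 * b)^t * (1/(M:ℝ))^k₀ ≤ δ ^ t := by
        have h1 : (1/(M:ℝ))^k₀ ≤ ((b:ℝ) ^ t) ^ k₀ := by
          refine pow_le_pow_left₀ (by positivity) ?_ k₀
          have h3 : b ^ t = (u ^ t)⁻¹ := by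
            rw [hbdef, Real.inv_rpow hu0.le]
          rw [one_div, h3]
          exact inv_anti₀ (Real.rpow_pos_of_pos hu0 t) hMut.le
        have h4 : (ρ/2*b)^t * ((b^t)^k₀ : ℝ) = (Rk (k₀+1)) ^ t := by
          have h5 : Rk (k₀+1) = (ρ/2*b) * b^k₀ := by
            have : Rk (k₀+1) = (ρ/2) * b^(k₀+1) := rfl
            rw [this]; ring
          rw [h5, Real.mul_rpow (by positivity) (pow_nonneg hb0.le _)]
          congr 1
          rw [← Real.rpow_natCast b k₀, ← Real.rpow_mul hb0.le, mul_comm ((k₀:ℝ)) t,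
            Real.rpow_mul hb0.le, Real.rpow_natCast]
        have h6 : Rk (k₀+1) ^ t ≤ δ ^ t := Real.rpow_le_rpow (hRk0 _).le hk₀1.le htpos.le
        calc (ρ/2*b)^t * (1/(M:ℝ))^k₀ ≤ (ρ/2*b)^t * (b^t)^k₀ :=
              mul_le_mul_of_nonneg_left h1 (Real.rpow_nonneg (by positivity) t)
          _ = Rk (k₀+1)^t := h4
          _ ≤ δ^t := h6
      calc (c • μ) B = c * μ B := by rw [MeasureTheory.Measure.smul_apply, smul_eq_mul]
        _ ≤ c * ENNReal.ofReal ((1/(M:ℝ))^k₀) := mul_le_mul_right hμBk c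
        _ = ENNReal.ofReal ((ρ/2*b)^t * (1/(M:ℝ))^k₀) := by
            rw [hcdef, ← ENNReal.ofReal_mul (Real.rpow_nonneg (by positivity) t)]
        _ ≤ ENNReal.ofReal (δ^t) := ENNReal.ofReal_le_ofReal hreal
        _ = EMetric.diam B ^ t := by rw [hdiam, ENNReal.ofReal_rpow_of_pos hδpos]
  have hle : c • μ ≤ MeasureTheory.Measure.hausdorffMeasure t :=
    MeasureTheory.Measure.le_hausdorffMeasure t (c • μ) (ENNReal.ofReal (Rk 1)) hRk1pos hfrost
  have hμE : μ E = 1 := by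
    rw [hμapp E hEcomp.isClosed.measurableSet]
    have hpre : f ⁻¹' E = univ := eq_univ_of_forall (fun x => hfE x)
    rw [hpre, univ_inter, Real.volume_Ico]
    norm_num
  have hHE : MeasureTheory.Measure.hausdorffMeasure (X := Fin d → ℝ) t E ≠ 0 := by
    have hl := MeasureTheory.Measure.le_iff'.1 hle E
    rw [MeasureTheory.Measure.smul_apply, hμE, smul_eq_mul, mul_one] at hl
    intro h0
    rw [h0] at hl
    exact hcpos (le_antisymm hl zero_le)
  lift t to NNReal using htpos.le with t' ht'
  rw [ENNReal.ofReal_coe_nnreal]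
  exact le_dimH_of_hausdorffMeasure_ne_zero hHE
/-- If `F ⊆ [0,1]^d` is compact, every microset of `F` intersecting the open unit cube has
Hausdorff dimension at least the lower dimension of `F`. -/
theorem stmt3 (d : ℕ) (F : Set (Fin d → ℝ)) (hF : IsCompact F)
    (hFsub : F ⊆ Icc 0 1) :
    ∀ E : Set (Fin d → ℝ), InGallery d F E → ENNReal.ofReal (lowerDim d F) ≤ dimH E := by
  intro E hE
  obtain ⟨⟨hEcomp, hEsub, D, hDm, hconv⟩, hint⟩ := hE
  obtain ⟨z, hzE, hzint⟩ := hint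
  set T : ℝ := (dimH E).toReal with hT
  have hdim_ne : dimH E ≠ ⊤ := by
    have h1 : dimH E ≤ dimH (univ : Set (Fin d → ℝ)) := dimH_mono (subset_univ E)
    rw [Real.dimH_univ_pi_fin d] at h1
    exact ne_top_of_le_ne_top (ENNReal.natCast_ne_top d) h1
  have hTdim : ENNReal.ofReal T = dimH E := ENNReal.ofReal_toReal hdim_ne
  obtain ⟨ε, hε0, hεsub⟩ : ∃ ε > 0, ball z ε ⊆ interior (Icc (0:Fin d→ℝ) 1) :=
    Metric.isOpen_iff.1 isOpen_interior z hzint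
  set ρ : ℝ := min (ε/4) (1/4) with hρdef
  have hρ0 : 0 < ρ := lt_min (by linarith) (by norm_num)
  have hρ1 : ρ < 1 := lt_of_le_of_lt (min_le_right _ _) (by norm_num)
  have hρsub : closedBall z (2*ρ) ⊆ Icc 0 1 := by
    refine subset_trans (closedBall_subset_ball ?_) (hεsub.trans interior_subset)
    have := min_le_left (ε/4) (1/4)
    rw [hρdef]
    linarith [min_le_left (ε/4) (1/4)]
  have hmain : ∀ s' ∈ {s : ℝ | 0 ≤ s ∧ ∃ C : ℝ, 0 < C ∧ ∀ R : ℝ, 0 < R → R < 1 →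
      ∀ r : ℝ, 0 < r → r < R → ∀ x ∈ F,
        C * (R / r) ^ s ≤ (coverNum d (closedBall x R ∩ F) r : ℝ)}, s' ≤ T := by
    rintro s' ⟨hs'0, C, hC, hs'⟩
    rcases eq_or_lt_of_le hs'0 with heq | hs'pos
    · rw [← heq]
      exact ENNReal.toReal_nonneg
    · have hP := limit_bound hEsub hDm hconv hC hs'0 hs' hzE hρ0 hρ1 hρsub
      have hC4 : 0 < C / 4 ^ s' := div_pos hC (Real.rpow_pos_of_pos (by norm_num) s')
      have hk := key_lemma hEcomp hzE hρ0 hC4 hs'pos hP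
      rw [← hTdim] at hk
      exact (ENNReal.ofReal_le_ofReal_iff ENNReal.toReal_nonneg).1 hk
  rw [lowerDim, ← hTdim]
  exact ENNReal.ofReal_le_ofReal (Real.sSup_le hmain ENNReal.toReal_nonneg)
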